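/- Let ν ≠ 0, x > 0, and suppose λ is a real root of λ³ + λ² − (ν² + x²)λ − ν² = 0 with λ > |ν| (the largest root λ_I). Then, viewing λ_I as a function of x, λ_I is strictly increasing on (0, ∞). -/
import Mathlib


open Real

/-- Modified Bessel function of the first kind `I_ν(x)` (for `x > 0`),
defined by its standard power series. -/
noncomputable def besselI (ν x : ℝ) : ℝ :=
  ∑' k : ℕ, (x / 2) ^ (2 * k) / ((Nat.factorial k : ℝ) * Real.Gamma (k + ν + 1)) * (x / 2) ^ ν

/-- Modified Bessel function of the second kind `K_ν(x)` (for `x > 0`),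
defined by its standard integral representation. -/
noncomputable def besselK (ν x : ℝ) : ℝ :=
  ∫ t in Set.Ioi (0 : ℝ), Real.exp (-x * Real.cosh t) * Real.cosh (ν * t)

theorem largest_root_strictMono (ν : ℝ) (hν : ν ≠ 0) (x₁ x₂ l₁ l₂ : ℝ)
    (hx₁ : 0 < x₁) (hx₂ : 0 < x₂) (hlt : x₁ < x₂)
    (h₁ : l₁ ^ 3 + l₁ ^ 2 - (ν ^ 2 + x₁ ^ 2) * l₁ - ν ^ 2 = 0) (hl₁ : |ν| < l₁)
    (h₂ : l₂ ^ 3 + l₂ ^ 2 - (ν ^ 2 + x₂ ^ 2) * l₂ - ν ^ 2 = 0) (hl₂ : |ν| < l₂) :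
    l₁ < l₂ := by
  by_contra h
  push_neg at h
  have hl1 : 0 < l₁ := lt_of_le_of_lt (abs_nonneg ν) hl₁
  have hl2 : 0 < l₂ := lt_of_le_of_lt (abs_nonneg ν) hl₂
  have hv1 : ν ^ 2 < l₁ ^ 2 := by
    have := sq_abs ν; nlinarith [abs_nonneg ν]
  have hv2 : ν ^ 2 < l₂ ^ 2 := by
    have := sq_abs ν; nlinarith [abs_nonneg ν]
  have hx : x₁ ^ 2 < x₂ ^ 2 := by nlinarith
  nlinarith [mul_pos hl1 hl2, mul_nonneg (mul_nonneg hl1.le hl2.le) (sub_nonneg.2 h),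
    mul_nonneg (sub_nonneg.2 h) (sq_nonneg ν), mul_pos (mul_pos hl1 hl2) (sub_pos.2 hx)]
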